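/- For all integers N > 1, K > 1, and M with 1 ≤ M ≤ K−1, if M+1 does not divide K, then R > R*, where R := (N−1)/(N − P_0) with P_0 := (1 + ∑_{k=1}^{g−1} r_k (N−1)^k)^{−1}, and R* := (N^g − N^{g−1})/(N^g − 1). -/

import Mathlib

open Finset

/-- `g := ⌈K/(M+1)⌉`, the ceiling of the exact rational quotient `K/(M+1)`. -/
def gVal (K M : ℕ) : ℕ := ⌈(K : ℚ) / (M + 1)⌉₊

/-- `r_k := ∏_{j=1}^{k} (K/(M+1) − j)/j` as a rational number. -/
def rVal (K M : ℕ) (k : ℕ) : ℚ :=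
  ∏ j ∈ Finset.Icc 1 k, ((K : ℚ) / (M + 1) - (j : ℚ)) / (j : ℚ)

/-- `P_0 := (1 + ∑_{k=1}^{g−1} r_k (N−1)^k)⁻¹`. -/
def P0Val (N K M : ℕ) : ℚ :=
  (1 + ∑ k ∈ Finset.Icc 1 (gVal K M - 1), rVal K M k * ((N : ℚ) - 1) ^ k)⁻¹

/-- `R := (N−1)/(N − P_0)`. -/
def RVal (N K M : ℕ) : ℚ := ((N : ℚ) - 1) / ((N : ℚ) - P0Val N K M)

/-- `R* := (N^g − N^{g−1})/(N^g − 1)`. -/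
def RstarVal (N K M : ℕ) : ℚ :=
  ((N : ℚ) ^ gVal K M - (N : ℚ) ^ (gVal K M - 1)) / ((N : ℚ) ^ gVal K M - 1)

/-- Binomial coefficient as a product of ratios. -/
lemma choose_eq_prod_ratio (n k : ℕ) (hk : k ≤ n) :
    ((n.choose k : ℚ)) = ∏ j ∈ Finset.Icc 1 k, (((n : ℚ) + 1) - j) / j := by
  induction k with
  | zero => simp
  | succ k ih =>
    have hk' : k ≤ n := Nat.le_of_succ_le hk
    rw [Finset.prod_Icc_succ_top (Nat.le_add_left 1 k), ← ih hk']
    have h := Nat.choose_succ_right_eq n k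
    have hcast : ((n.choose (k+1) : ℚ)) * ((k : ℚ) + 1)
        = (n.choose k : ℚ) * ((n : ℚ) - k) := by
      rw [← Nat.cast_sub hk']
      exact_mod_cast h
    have hk1 : ((k : ℚ) + 1) ≠ 0 := by positivity
    field_simp
    push_cast
    linear_combination hcast

/-- if `M+1` does not divide `K` then `R > R*`. -/
theorem rate_gt_Rstar_of_not_dvd (N K M : ℕ) (hN : 1 < N) (hK : 1 < K)
    (hM1 : 1 ≤ M) (hM2 : M ≤ K - 1) (hndvd : ¬ (M + 1) ∣ K) :
    RVal N K M > RstarVal N K M := by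
  set g := gVal K M with hgdef
  set x : ℚ := (K : ℚ) / ((M : ℚ) + 1) with hxdef
  have hN1 : (1:ℚ) < (N:ℚ) := by exact_mod_cast hN
  have hMpos : (0:ℚ) < (M:ℚ) + 1 := by positivity
  have hKM : M + 1 < K := by
    rcases lt_or_eq_of_le (show M + 1 ≤ K by omega) with h | h
    · exact h
    · exact absurd (h ▸ dvd_refl (M+1)) hndvd
  have hx1 : (1:ℚ) < x := by
    rw [hxdef, lt_div_iff₀ hMpos]
    have : ((M:ℚ) + 1) < (K:ℚ) := by exact_mod_cast hKM
    linarith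
  have hceil : ⌈x⌉₊ = g := rfl
  have hg2 : 2 ≤ g := by
    have : 1 < ⌈x⌉₊ := Nat.lt_ceil.mpr (by exact_mod_cast hx1)
    omega
  have hxg : x < (g : ℚ) := by
    rcases lt_or_eq_of_le (hceil ▸ Nat.le_ceil x) with h | h
    · exact h
    · exfalso
      apply hndvd
      have hK' : (K : ℚ) = ((M + 1) * g : ℕ) := by
        push_cast
        rw [hxdef] at h
        field_simp at h
        linarith [h]
      exact ⟨g, by exact_mod_cast hK'⟩
  have hg1x : ((g : ℚ) - 1) < x := by
    have h1 : g - 1 < ⌈x⌉₊ := by omega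
    have := Nat.lt_ceil.mp h1
    have hcast : ((g - 1 : ℕ) : ℚ) = (g : ℚ) - 1 := by
      have : 1 ≤ g := by omega
      push_cast [Nat.cast_sub this]
      ring
    linarith [hcast ▸ this]
  -- rVal as product in x
  have hrval : ∀ k, rVal K M k = ∏ j ∈ Finset.Icc 1 k, (x - j) / j := by
    intro k; rfl
  -- positivity and comparison of rVal with binomial coefficients
  have hfac_pos : ∀ k, k ≤ g - 1 → ∀ j ∈ Finset.Icc 1 k, (0:ℚ) < (x - j) / j := by
    intro k hk j hj
    rw [Finset.mem_Icc] at hj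
    have hj1 : (1:ℚ) ≤ (j:ℚ) := by exact_mod_cast hj.1
    have hjk : (j:ℚ) ≤ (k:ℚ) := by exact_mod_cast hj.2
    have hkg : (k:ℚ) ≤ (g:ℚ) - 1 := by
      have : (k:ℚ) ≤ ((g-1 : ℕ):ℚ) := by exact_mod_cast hk
      have hcast : ((g - 1 : ℕ) : ℚ) = (g : ℚ) - 1 := by
        have h1 : 1 ≤ g := by omega
        push_cast [Nat.cast_sub h1]; ring
      linarith [hcast ▸ this]
    have : (0:ℚ) < x - j := by linarith
    positivity
  have hr_pos : ∀ k, k ≤ g - 1 → 0 < rVal K M k := by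
    intro k hk
    rw [hrval]
    exact Finset.prod_pos (hfac_pos k hk)
  have hr_le : ∀ k, k ≤ g - 1 → rVal K M k ≤ ((g-1).choose k : ℚ) := by
    intro k hk
    rw [hrval, choose_eq_prod_ratio (g-1) k hk]
    have hcast : (((g-1 : ℕ)) : ℚ) + 1 = (g : ℚ) := by
      have h1 : 1 ≤ g := by omega
      push_cast [Nat.cast_sub h1]; ring
    rw [hcast]
    apply Finset.prod_le_prod
    · intro j hj; exact le_of_lt (hfac_pos k hk j hj)
    · intro j hj
      rw [Finset.mem_Icc] at hj
      have hj1 : (0:ℚ) < (j:ℚ) := by exact_mod_cast hj.1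
      exact (div_le_div_iff_of_pos_right hj1).mpr (by linarith)
  -- strict inequality at k = 1
  have hr1 : rVal K M 1 < ((g-1).choose 1 : ℚ) := by
    have h1 : rVal K M 1 = x - 1 := by
      rw [hrval]; simp
    have h2 : ((g-1).choose 1 : ℚ) = (g:ℚ) - 1 := by
      rw [Nat.choose_one_right]
      have h1g : 1 ≤ g := by omega
      push_cast [Nat.cast_sub h1g]; ring
    rw [h1, h2]; linarith
  set S : ℚ := 1 + ∑ k ∈ Finset.Icc 1 (g - 1), rVal K M k * ((N : ℚ) - 1) ^ k with hSdef
  have hP0 : P0Val N K M = S⁻¹ := rfl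
  have hNsub : (0:ℚ) < (N:ℚ) - 1 := by linarith
  have hS1 : (1:ℚ) ≤ S := by
    have h0 : 0 ≤ ∑ k ∈ Finset.Icc 1 (g - 1), rVal K M k * ((N : ℚ) - 1) ^ k := by
      apply Finset.sum_nonneg
      intro k hk
      rw [Finset.mem_Icc] at hk
      exact le_of_lt (mul_pos (hr_pos k hk.2) (by positivity))
    rw [hSdef]; linarith
  have hSpos : (0:ℚ) < S := by linarith
  -- S as a sum over range g
  have hSsum : S = ∑ k ∈ Finset.range g, rVal K M k * ((N:ℚ) - 1) ^ k := by
    rw [hSdef, show g = (g-1)+1 from by omega, Finset.sum_range_succ']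
    have h0 : rVal K M 0 * ((N:ℚ)-1)^0 = 1 := by simp [rVal]
    rw [h0]
    have hIcc : Finset.Icc 1 (g-1+1-1) = Finset.Ico 1 g := by
      rw [show g-1+1-1 = g-1 from by omega, ← Finset.Ico_add_one_right_eq_Icc,
        show g-1+1 = g from by omega]
    rw [hIcc, Finset.sum_Ico_eq_sum_range]
    simp [add_comm]
  have hbin : ((N:ℚ))^(g-1) = ∑ k ∈ Finset.range g, ((g-1).choose k : ℚ) * ((N:ℚ)-1)^k := by
    have h := add_pow ((N:ℚ)-1) 1 (g-1)
    rw [show (N:ℚ)-1+1 = (N:ℚ) by ring] at h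
    rw [h, show (g-1)+1 = g from by omega]
    apply Finset.sum_congr rfl
    intro k hk
    rw [one_pow]; ring
  have hSlt : S < (N:ℚ)^(g-1) := by
    rw [hSsum, hbin]
    apply Finset.sum_lt_sum
    · intro k hk
      rw [Finset.mem_range] at hk
      have hk' : k ≤ g - 1 := by omega
      exact mul_le_mul_of_nonneg_right (hr_le k hk') (by positivity)
    · exact ⟨1, Finset.mem_range.mpr (by omega),
        mul_lt_mul_of_pos_right hr1 (by positivity)⟩
  -- final arithmetic
  have hinv1 : S⁻¹ ≤ 1 := inv_le_one_of_one_le₀ hS1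
  have hinvpos : 0 < S⁻¹ := inv_pos.mpr hSpos
  have hdenR : 0 < (N:ℚ) - S⁻¹ := by linarith
  have hNg1 : (1:ℚ) < (N:ℚ)^g := one_lt_pow₀ hN1 (by omega)
  have hden2 : 0 < (N:ℚ)^g - 1 := by linarith
  rw [gt_iff_lt, RstarVal, RVal, hP0, div_lt_div_iff₀ hden2 hdenR]
  have hpow : (N:ℚ)^g = (N:ℚ)^(g-1) * N := by
    rw [← pow_succ]; congr 1; omega
  have hkey : 1 < (N:ℚ)^(g-1) * S⁻¹ := by
    rw [← div_eq_mul_inv, lt_div_iff₀ hSpos]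
    linarith
  rw [hpow]
  nlinarith [mul_pos hNsub (sub_pos.mpr hkey)]
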